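/- (Halving claim) For every connected component C of G and every k ≥ 0, if the number n_k of distinct values taken by R_k on C satisfies n_k ≥ 2, then the number of distinct values taken by R_{k+2} on C is at most n_k / 2; that is, 2 · card(R_{k+2} '' C) ≤ card(R_k '' C). In words, every two iterations the number of current sub-components inside each connected component is at least halved. -/

import Mathlib

open scoped Classical in
/-- The component-minimum map: `rho G v` is the least element of the
connected component of `v`. -/
noncomputable def rho {V : Type*} [Fintype V] [LinearOrder V] (G : SimpleGraph V) (v : V) : V :=
  (Finset.univ.filter fun w => G.Reachable w v).min'
    ⟨v, Finset.mem_filter.mpr ⟨Finset.mem_univ v, SimpleGraph.Reachable.refl v⟩⟩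

open scoped Classical in
/-- The update map `T_R`: `upd G R v` is the minimum of the finite nonempty set
`{R v} ∪ {R b : ∃ a, a adjacent to b and R a = R v}`. -/
noncomputable def upd {V : Type*} [Fintype V] [LinearOrder V] (G : SimpleGraph V)
    (R : V → V) (v : V) : V :=
  (insert (R v) ((Finset.univ.filter fun b => ∃ a, G.Adj a b ∧ R a = R v).image R)).min'
    (Finset.insert_nonempty _ _)

/-- The algorithm's iteration: `R_0 = id`, `R_{k+1} = (T_{R_k})^[card V]`. -/
noncomputable def Rseq {V : Type*} [Fintype V] [LinearOrder V] (G : SimpleGraph V) :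
    ℕ → V → V
  | 0 => id
  | k + 1 => (upd G (Rseq G k))^[Fintype.card V]

section Aux

open scoped Classical

variable {V : Type*} [Fintype V] [LinearOrder V] {G : SimpleGraph V} {R : V → V}

/-- The invariants preserved by the algorithm. -/
def AlgInv (G : SimpleGraph V) (R : V → V) : Prop :=
  (∀ v, R v ≤ v) ∧ (∀ v, R (R v) = R v) ∧ (∀ v, G.Reachable (R v) v)

lemma upd_le (v : V) : upd G R v ≤ R v :=
  Finset.min'_le _ _ (Finset.mem_insert_self _ _)

lemma upd_mem (v : V) :
    upd G R v = R v ∨ ∃ b a, G.Adj a b ∧ R a = R v ∧ upd G R v = R b := by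
  have hm := Finset.min'_mem
    (insert (R v) ((Finset.univ.filter fun b => ∃ a, G.Adj a b ∧ R a = R v).image R))
    (Finset.insert_nonempty _ _)
  rw [Finset.mem_insert] at hm
  rcases hm with hm | hm
  · exact Or.inl hm
  · rw [Finset.mem_image] at hm
    obtain ⟨b, hb, hbe⟩ := hm
    rw [Finset.mem_filter] at hb
    obtain ⟨a, ha, hae⟩ := hb.2
    exact Or.inr ⟨b, a, ha, hae, hbe.symm⟩

lemma upd_congr {v w : V} (h : R v = R w) : upd G R v = upd G R w := by
  simp only [upd, h]

lemma upd_le_adj {a b v : V} (h : G.Adj a b) (he : R a = R v) : upd G R v ≤ R b := by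
  refine Finset.min'_le _ _ (Finset.mem_insert_of_mem ?_)
  exact Finset.mem_image.mpr ⟨b, Finset.mem_filter.mpr ⟨Finset.mem_univ b, a, h, he⟩, rfl⟩

lemma upd_le_self (hI : AlgInv G R) (v : V) : upd G R v ≤ v :=
  (upd_le v).trans (hI.1 v)

lemma upd_fix_range (hI : AlgInv G R) (v : V) : R (upd G R v) = upd G R v := by
  rcases upd_mem (G := G) (R := R) v with hm | ⟨b, a, _, _, hm⟩
  · rw [hm]; exact hI.2.1 v
  · rw [hm]; exact hI.2.1 b

lemma upd_reachable (hI : AlgInv G R) (v : V) : G.Reachable (upd G R v) v := by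
  rcases upd_mem (G := G) (R := R) v with hm | ⟨b, a, hab, hae, hm⟩
  · rw [hm]; exact hI.2.2 v
  · rw [hm]
    have h1 : G.Reachable (R b) b := hI.2.2 b
    have h2 : G.Reachable b a := (hab.symm).reachable
    have h3 : G.Reachable a (R a) := (hI.2.2 a).symm
    have h4 : G.Reachable (R a) v := hae ▸ hI.2.2 v
    exact ((h1.trans h2).trans h3).trans h4

lemma iter_le (hI : AlgInv G R) : ∀ (n : ℕ) (v : V), (upd G R)^[n] v ≤ v := by
  intro n
  induction n with
  | zero => intro v; simp
  | succ n ih =>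
    intro v
    rw [Function.iterate_succ_apply']
    exact (upd_le_self hI _).trans (ih v)

lemma iter_reachable (hI : AlgInv G R) : ∀ (n : ℕ) (v : V),
    G.Reachable ((upd G R)^[n] v) v := by
  intro n
  induction n with
  | zero => intro v; simp
  | succ n ih =>
    intro v
    rw [Function.iterate_succ_apply']
    exact (upd_reachable hI _).trans (ih v)

lemma iter_le_apply (n : ℕ) (hI : AlgInv G R) (v : V) :
    (upd G R)^[n + 1] v ≤ upd G R v := by
  rw [Function.iterate_succ_apply]
  exact iter_le hI n (upd G R v)

lemma iter_congr {v w : V} (h : R v = R w) (n : ℕ) :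
    (upd G R)^[n + 1] v = (upd G R)^[n + 1] w := by
  rw [Function.iterate_succ_apply, Function.iterate_succ_apply, upd_congr h]

lemma iterate_card_fixed {f : V → V} (hf : ∀ x, f x ≤ x) (x : V) :
    f (f^[Fintype.card V] x) = f^[Fintype.card V] x := by
  set N := Fintype.card V with hN
  have hex : ∃ i, i ≤ N ∧ f (f^[i] x) = f^[i] x := by
    by_contra hc
    push_neg at hc
    have hstep : ∀ i, i ≤ N → f^[i + 1] x < f^[i] x := by
      intro i hi
      rw [Function.iterate_succ_apply']
      exact lt_of_le_of_ne (hf _) (hc i hi)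
    have key : ∀ j i, i < j → j ≤ N → f^[j] x < f^[i] x := by
      intro j
      induction j with
      | zero => intro i hi _; exact absurd hi (Nat.not_lt_zero i)
      | succ n ih =>
        intro i hi hjN
        have h1 : f^[n + 1] x < f^[n] x := hstep n (by omega)
        rcases Nat.lt_succ_iff_lt_or_eq.mp hi with h | h
        · exact h1.trans (ih i h (by omega))
        · rw [h]; exact h1
    have hinj : Function.Injective (fun i : Fin (N + 1) => f^[(i : ℕ)] x) := by
      intro i j hij
      by_contra hne
      rcases lt_or_gt_of_ne hne with hlt | hlt
      · exact absurd hij (ne_of_gt (key j i hlt (Nat.lt_succ_iff.mp j.2)))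
      · exact absurd hij (ne_of_lt (key i j hlt (Nat.lt_succ_iff.mp i.2)))
    have := Fintype.card_le_of_injective _ hinj
    simp only [Fintype.card_fin, ← hN] at this
    omega
  obtain ⟨i, hiN, hfix⟩ := hex
  have hNeq : N - i + i = N := Nat.sub_add_cancel hiN
  have : f^[N] x = f^[i] x := by
    conv_lhs => rw [← hNeq]
    rw [Function.iterate_add_apply]
    exact Function.iterate_fixed hfix (N - i)
  rw [this, hfix]

lemma Rseq_inv (G : SimpleGraph V) : ∀ k, AlgInv G (Rseq G k) := by
  intro k
  induction k with
  | zero =>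
    exact ⟨fun v => le_refl v, fun v => rfl, fun v => SimpleGraph.Reachable.refl v⟩
  | succ k ih =>
    refine ⟨fun v => ?_, fun v => ?_, fun v => ?_⟩
    · exact iter_le ih _ v
    · show (upd G (Rseq G k))^[Fintype.card V]
        ((upd G (Rseq G k))^[Fintype.card V] v) = _
      have hfix : upd G (Rseq G k) ((upd G (Rseq G k))^[Fintype.card V] v) =
          (upd G (Rseq G k))^[Fintype.card V] v :=
        iterate_card_fixed (upd_le_self ih) v
      exact Function.iterate_fixed hfix _
    · exact iter_reachable ih _ v

lemma Rseq_succ_le [Nonempty V] (G : SimpleGraph V) (k : ℕ) (v : V) :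
    Rseq G (k + 1) v ≤ Rseq G k v := by
  obtain ⟨m, hm⟩ := Nat.exists_eq_succ_of_ne_zero (Fintype.card_ne_zero (α := V))
  show (upd G (Rseq G k))^[Fintype.card V] v ≤ _
  rw [hm]
  exact (iter_le_apply m (Rseq_inv G k) v).trans (upd_le v)

lemma Rseq_succ_congr [Nonempty V] (G : SimpleGraph V) (k : ℕ) {v w : V}
    (h : Rseq G k v = Rseq G k w) : Rseq G (k + 1) v = Rseq G (k + 1) w := by
  obtain ⟨m, hm⟩ := Nat.exists_eq_succ_of_ne_zero (Fintype.card_ne_zero (α := V))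
  show (upd G (Rseq G k))^[Fintype.card V] v = (upd G (Rseq G k))^[Fintype.card V] w
  rw [hm]
  exact iter_congr h m

lemma Rseq_root_mono [Nonempty V] (G : SimpleGraph V) (k : ℕ) {v : V}
    (h : Rseq G (k + 1) v = v) : Rseq G k v = v := by
  refine le_antisymm ((Rseq_inv G k).1 v) ?_
  calc v = Rseq G (k + 1) v := h.symm
    _ ≤ Rseq G k v := Rseq_succ_le G k v

lemma cross_edge {R : V → V} {c : V} :
    ∀ {x y : V}, G.Walk x y → R x = c → R y ≠ c →
      ∃ a b, G.Adj a b ∧ R a = c ∧ R b ≠ c := by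
  intro x y p
  induction p with
  | nil => intro h1 h2; exact absurd h1 h2
  | @cons x z y h p ih =>
    intro h1 h2
    by_cases hz : R z = c
    · exact ih hz h2
    · exact ⟨x, z, h, h1, hz⟩

lemma fiber_two [Nonempty V] (G : SimpleGraph V) {k : ℕ} {u : V}
    (hu'' : Rseq G (k + 2) u = u)
    (hW : ∃ w, G.Reachable w u ∧ Rseq G k w ≠ u) :
    ∃ r, r ≠ u ∧ Rseq G k r = r ∧ G.Reachable r u ∧ Rseq G (k + 2) r = u := by
  have hu' : Rseq G (k + 1) u = u := Rseq_root_mono G (k + 1) hu''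
  have hu0 : Rseq G k u = u := Rseq_root_mono G k hu'
  by_cases hcase : ∃ w, Rseq G (k + 1) w = u ∧ Rseq G k w ≠ u
  · obtain ⟨w, hw1, hw2⟩ := hcase
    refine ⟨Rseq G k w, hw2, (Rseq_inv G k).2.1 w, ?_, ?_⟩
    · have h1 : G.Reachable (Rseq G k w) w := (Rseq_inv G k).2.2 w
      have h2 : G.Reachable u w := hw1 ▸ (Rseq_inv G (k + 1)).2.2 w
      exact h1.trans h2.symm
    · have h1 : Rseq G (k + 1) (Rseq G k w) = u := by
        have := Rseq_succ_congr G k ((Rseq_inv G k).2.1 w)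
        rw [this, hw1]
      have h2 : Rseq G (k + 2) (Rseq G k w) = Rseq G (k + 2) u := by
        have : Rseq G (k + 1) (Rseq G k w) = Rseq G (k + 1) u := by rw [h1, hu']
        exact Rseq_succ_congr G (k + 1) this
      rw [h2, hu'']
  · push_neg at hcase
    exfalso
    obtain ⟨w0, hw0r, hw0⟩ := hW
    obtain ⟨a, b, hab, ha, hb⟩ :=
      cross_edge (G := G) (hw0r.symm.some) hu0 hw0
    have hRb1 : Rseq G (k + 1) b ≤ u := by
      have h1 : upd G (Rseq G k) b ≤ Rseq G k a := upd_le_adj hab.symm rfl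
      have h2 : Rseq G (k + 1) b ≤ upd G (Rseq G k) b := by
        obtain ⟨m, hm⟩ := Nat.exists_eq_succ_of_ne_zero (Fintype.card_ne_zero (α := V))
        show (upd G (Rseq G k))^[Fintype.card V] b ≤ _
        rw [hm]
        exact iter_le_apply m (Rseq_inv G k) b
      exact h2.trans (h1.trans_eq ha)
    have hRb2 : Rseq G (k + 1) b ≠ u := fun hh => hb (hcase b hh)
    have hRblt : Rseq G (k + 1) b < u := lt_of_le_of_ne hRb1 hRb2
    have ha' : Rseq G (k + 1) a = Rseq G (k + 1) u :=
      Rseq_succ_congr G k (by rw [ha, hu0])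
    have hfin : Rseq G (k + 2) u ≤ Rseq G (k + 1) b := by
      have h1 : upd G (Rseq G (k + 1)) u ≤ Rseq G (k + 1) b := upd_le_adj hab ha'
      have h2 : Rseq G (k + 2) u ≤ upd G (Rseq G (k + 1)) u := by
        obtain ⟨m, hm⟩ := Nat.exists_eq_succ_of_ne_zero (Fintype.card_ne_zero (α := V))
        show (upd G (Rseq G (k + 1)))^[Fintype.card V] u ≤ _
        rw [hm]
        exact iter_le_apply m (Rseq_inv G (k + 1)) u
      exact h2.trans h1
    rw [hu''] at hfin
    exact absurd (hfin.trans_lt hRblt) (lt_irrefl u)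

end Aux

open scoped Classical in
theorem stmt5 {V : Type*} [Fintype V] [Nonempty V] [LinearOrder V] (G : SimpleGraph V)
    (v : V) (k : ℕ)
    (h : 2 ≤ (((Finset.univ.filter fun u => G.Reachable u v)).image (Rseq G k)).card) :
    2 * (((Finset.univ.filter fun u => G.Reachable u v)).image (Rseq G (k + 2))).card ≤
      (((Finset.univ.filter fun u => G.Reachable u v)).image (Rseq G k)).card := by
  set C := Finset.univ.filter fun u => G.Reachable u v with hC
  have himg : ∀ m : ℕ, C.image (Rseq G m) = C.filter fun r => Rseq G m r = r := by
    intro m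
    ext x
    simp only [Finset.mem_image, Finset.mem_filter, hC, Finset.mem_univ, true_and]
    constructor
    · rintro ⟨y, hy, rfl⟩
      exact ⟨((Rseq_inv G m).2.2 y).trans hy, (Rseq_inv G m).2.1 y⟩
    · rintro ⟨hx, hfix⟩
      exact ⟨x, hx, hfix⟩
  rw [himg k] at h ⊢
  rw [himg (k + 2)]
  set S := C.filter fun r => Rseq G k r = r with hS
  set S'' := C.filter fun r => Rseq G (k + 2) r = r with hS''
  have hmap : ∀ r ∈ S, Rseq G (k + 2) r ∈ S'' := by
    intro r hr
    rw [hS] at hr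
    rw [hS'', Finset.mem_filter]
    rw [Finset.mem_filter] at hr
    refine ⟨?_, (Rseq_inv G (k + 2)).2.1 r⟩
    rw [hC, Finset.mem_filter] at hr ⊢
    exact ⟨Finset.mem_univ _, ((Rseq_inv G (k + 2)).2.2 r).trans hr.1.2⟩
  have hfib : ∀ u ∈ S'', 2 ≤ (S.filter fun r => Rseq G (k + 2) r = u).card := by
    intro u hu
    rw [hS'', Finset.mem_filter, hC, Finset.mem_filter] at hu
    obtain ⟨⟨_, huv⟩, hufix⟩ := hu
    have hu' : Rseq G (k + 1) u = u := Rseq_root_mono G (k + 1) hufix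
    have hu0 : Rseq G k u = u := Rseq_root_mono G k hu'
    -- find w ≠ u in S
    obtain ⟨a, haS, b, hbS, hne⟩ := Finset.one_lt_card.mp (by omega : 1 < S.card)
    have hwit : ∃ w, w ∈ S ∧ w ≠ u := by
      by_cases hau : a = u
      · exact ⟨b, hbS, by rw [← hau]; exact hne.symm⟩
      · exact ⟨a, haS, hau⟩
    obtain ⟨w, hwS, hwne⟩ := hwit
    rw [hS, Finset.mem_filter, hC, Finset.mem_filter] at hwS
    have hwu : G.Reachable w u := hwS.1.2.trans huv.symm
    have hW : ∃ w', G.Reachable w' u ∧ Rseq G k w' ≠ u :=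
      ⟨w, hwu, by rw [hwS.2]; exact hwne⟩
    obtain ⟨r, hrne, hrfix, hru, hr2⟩ := fiber_two G hufix hW
    have huS : u ∈ S := by
      rw [hS, Finset.mem_filter, hC, Finset.mem_filter]
      exact ⟨⟨Finset.mem_univ _, huv⟩, hu0⟩
    have hrS : r ∈ S := by
      rw [hS, Finset.mem_filter, hC, Finset.mem_filter]
      exact ⟨⟨Finset.mem_univ _, hru.trans huv⟩, hrfix⟩
    have humem : u ∈ S.filter fun r => Rseq G (k + 2) r = u :=
      Finset.mem_filter.mpr ⟨huS, hufix⟩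
    have hrmem : r ∈ S.filter fun r' => Rseq G (k + 2) r' = u :=
      Finset.mem_filter.mpr ⟨hrS, hr2⟩
    have := Finset.one_lt_card.mpr ⟨u, humem, r, hrmem, hrne.symm⟩
    omega
  calc 2 * S''.card = ∑ _u ∈ S'', 2 := by
        rw [Finset.sum_const, smul_eq_mul, mul_comm]
    _ ≤ ∑ u ∈ S'', (S.filter fun r => Rseq G (k + 2) r = u).card :=
        Finset.sum_le_sum hfib
    _ = S.card := (Finset.card_eq_sum_card_fiberwise hmap).symm
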